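/- Let V be a finite nonempty set, r : V × V → ℝ with r(x,y) = r(y,x) ≥ 0 and r(x,x) = 0, and r(x) = Σ_{y∈V} r(x,y). Let b > 0, M ≥ 0, T ≥ 0, and let A be the (V⊕V)×(V⊕V) real matrix A = fromBlocks A1 A2 0 0 with A1(x,x) = b − r(x), A1(x,y) = r(x,y) for x ≠ y, and A2(x,y) = r(x,y). Let z : V⊕V → ℝ be a row vector with 0 ≤ z(inl x) ≤ M and z(inr x) = 0 for every x ∈ V. Then for every subset K ⊆ V, Σ_{y∈K} [ (z ⬝ exp(TA))(inl y) + (z ⬝ exp(TA))(inr y) ] ≤ M e^{bT} Σ_{y∈K} (1 + r(y)/b), where z ⬝ exp(TA) denotes the row-vector–matrix product (vecMul). -/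

import Mathlib

open Matrix

section AuxLemmas
open NormedSpace Nat

attribute [local instance] Matrix.linftyOpNormedAddCommGroup Matrix.linftyOpNormedRing
  Matrix.linftyOpNormedAlgebra

variable {n : Type*} [Fintype n] [DecidableEq n]

/-- `N ↦ v ᵥ* N` as a continuous linear map. -/
noncomputable def vecMulCLM (v : n → ℝ) : Matrix n n ℝ →L[ℝ] (n → ℝ) :=
  LinearMap.toContinuousLinearMap
    { toFun := fun N => Matrix.vecMul v N
      map_add' := fun A B => Matrix.vecMul_add A B v
      map_smul' := fun c A => by
        ext j
        simp [Matrix.vecMul, dotProduct, Finset.mul_sum, mul_left_comm] }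

omit [DecidableEq n] in
lemma vecMulCLM_apply (v : n → ℝ) (N : Matrix n n ℝ) : vecMulCLM v N = Matrix.vecMul v N := rfl

/-- If `v` is a left eigenvector of `M` with eigenvalue `c`, then it is a left eigenvector of
`exp M` with eigenvalue `e^c`. -/
lemma vecMul_exp_eig (M : Matrix n n ℝ) (v : n → ℝ) (c : ℝ)
    (h : Matrix.vecMul v M = c • v) :
    Matrix.vecMul v (exp M) = Real.exp c • v := by
  have hpow : ∀ k : ℕ, Matrix.vecMul v (M ^ k) = (c ^ k) • v := by
    intro k
    induction k with
    | zero => simp [Matrix.vecMul_one]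
    | succ k ih =>
        rw [pow_succ, ← Matrix.vecMul_vecMul, ih, Matrix.smul_vecMul, h, pow_succ, smul_smul]
  have hs : Summable fun k : ℕ => ((k ! : ℝ)⁻¹) • M ^ k := expSeries_summable' (𝕂 := ℝ) M
  have : Matrix.vecMul v (exp M) = ∑' k : ℕ, ((k ! : ℝ)⁻¹) • Matrix.vecMul v (M ^ k) := by
    rw [exp_eq_tsum ℝ, ← vecMulCLM_apply, (vecMulCLM v).map_tsum hs]
    simp [vecMulCLM_apply]
  rw [this]
  have h2 : ∀ k : ℕ, ((k ! : ℝ)⁻¹) • Matrix.vecMul v (M ^ k)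
      = (((k ! : ℝ)⁻¹) * c ^ k) • v := by
    intro k; rw [hpow k, smul_smul]
  simp_rw [h2]
  rw [Summable.tsum_smul_const (Real.summable_pow_div_factorial c |>.congr
    (fun k => by rw [div_eq_inv_mul]))]
  congr 1
  rw [Real.exp_eq_exp_ℝ, exp_eq_tsum ℝ]
  simp [div_eq_inv_mul, smul_eq_mul]

/-- Entry evaluation as a continuous linear map. -/
noncomputable def entryCLM (x y : n) : Matrix n n ℝ →L[ℝ] ℝ :=
  LinearMap.toContinuousLinearMap
    { toFun := fun N => N x y
      map_add' := fun _ _ => rfl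
      map_smul' := fun _ _ => rfl }

omit [DecidableEq n] in
lemma entryCLM_apply (x y : n) (N : Matrix n n ℝ) : entryCLM x y N = N x y := rfl

lemma exp_entry_nonneg_of_nonneg (M : Matrix n n ℝ) (h : ∀ x y, 0 ≤ M x y) (x y : n) :
    0 ≤ exp M x y := by
  have hpow : ∀ (k : ℕ) (i j : n), 0 ≤ (M ^ k) i j := by
    intro k
    induction k with
    | zero => intro i j; by_cases h' : i = j <;> simp [Matrix.one_apply, h']
    | succ k ih =>
        intro i j
        rw [pow_succ, Matrix.mul_apply]
        exact Finset.sum_nonneg fun l _ => mul_nonneg (ih i l) (h l j)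
  have hs : Summable fun k : ℕ => ((k ! : ℝ)⁻¹) • M ^ k := expSeries_summable' (𝕂 := ℝ) M
  have hE0 : exp M = ∑' k : ℕ, ((k ! : ℝ)⁻¹) • M ^ k := by
    rw [exp_eq_tsum ℝ]
  have hE : exp M x y = ∑' k : ℕ, ((k ! : ℝ)⁻¹) * (M ^ k) x y := by
    have h1 : exp M x y = entryCLM x y (∑' k : ℕ, ((k ! : ℝ)⁻¹) • M ^ k) := by
      rw [← hE0]; rfl
    rw [h1, (entryCLM x y).map_tsum hs]
    simp [entryCLM_apply]
  rw [hE]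
  exact tsum_nonneg fun k => mul_nonneg (by positivity) (hpow k x y)

/-- If `B` plus a nonnegative multiple of the identity is entrywise nonnegative, then
`exp B` is entrywise nonnegative. -/
lemma exp_entry_nonneg_shift (B : Matrix n n ℝ) (c : ℝ)
    (h : ∀ x y, 0 ≤ B x y + (if x = y then c else 0)) (x y : n) :
    0 ≤ exp B x y := by
  have hB : B = (B + c • (1 : Matrix n n ℝ)) + (-c) • 1 := by
    rw [neg_smul, add_assoc, add_neg_cancel, add_zero]
  have hcomm : Commute (B + c • (1 : Matrix n n ℝ)) ((-c) • (1 : Matrix n n ℝ)) :=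
    (Commute.one_right _).smul_right _
  have hexp1 : exp ((-c) • (1 : Matrix n n ℝ)) = Real.exp (-c) • (1 : Matrix n n ℝ) := by
    have h1 : ((-c) • (1 : Matrix n n ℝ)) = algebraMap ℝ (Matrix n n ℝ) (-c) :=
      (Algebra.algebraMap_eq_smul_one (-c)).symm
    rw [h1, ← (show algebraMap ℝ (Matrix n n ℝ) (NormedSpace.exp (-c)) = NormedSpace.exp (algebraMap ℝ (Matrix n n ℝ) (-c)) from algebraMap_exp_comm (-c)), Algebra.algebraMap_eq_smul_one, Real.exp_eq_exp_ℝ]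
  rw [hB, Matrix.exp_add_of_commute _ _ hcomm, hexp1, Matrix.mul_smul, Matrix.mul_one,
    Matrix.smul_apply]
  refine mul_nonneg (Real.exp_pos _).le (exp_entry_nonneg_of_nonneg _ ?_ x y)
  intro i j
  have := h i j
  have h2 : (B + c • (1 : Matrix n n ℝ)) i j = B i j + c * (if i = j then 1 else 0) := by
    simp [Matrix.add_apply, Matrix.smul_apply, Matrix.one_apply]
  rw [h2]
  by_cases h' : i = j <;> simp only [h', if_true, if_false, mul_one, mul_zero] <;>
    simpa [h'] using this

end AuxLemmas

/-- Matrix form of Lemma 2.2: if the row vector `z` has alive coordinates between `0` and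
`M` and zero ghost coordinates, then for the generator `A = fromBlocks A1 A2 0 0` of the
first-moment semigroup of the branching process, the expected number of alive plus ghost
particles in `K` at time `T`, namely `∑_{y∈K} [(z ⬝ exp(TA))(inl y) + (z ⬝ exp(TA))(inr y)]`,
is at most `M e^{bT} ∑_{y∈K} (1 + r(y)/b)`. -/
theorem stmt_6 {V : Type*} [Fintype V] [DecidableEq V] [Nonempty V]
    (r : V → V → ℝ) (hsymm : ∀ x y, r x y = r y x) (hnonneg : ∀ x y, 0 ≤ r x y)
    (hdiag : ∀ x, r x x = 0) (b M T : ℝ) (hb : 0 < b) (hM : 0 ≤ M) (hT : 0 ≤ T)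
    (z : V ⊕ V → ℝ) (hz0 : ∀ x : V, 0 ≤ z (Sum.inl x)) (hzM : ∀ x : V, z (Sum.inl x) ≤ M)
    (hzg : ∀ x : V, z (Sum.inr x) = 0) (K : Finset V) :
    let A1 : Matrix V V ℝ := fun x w => if x = w then b - ∑ u : V, r x u else r x w
    let A2 : Matrix V V ℝ := fun x w => r x w
    let A : Matrix (V ⊕ V) (V ⊕ V) ℝ :=
      Matrix.fromBlocks A1 A2 (0 : Matrix V V ℝ) (0 : Matrix V V ℝ)
    ∑ y ∈ K, (Matrix.vecMul z (NormedSpace.exp (T • A)) (Sum.inl y)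
        + Matrix.vecMul z (NormedSpace.exp (T • A)) (Sum.inr y))
      ≤ M * Real.exp (b * T) * ∑ y ∈ K, (1 + (∑ w : V, r y w) / b) := by
  intro A1 A2 A
  set E : Matrix (V ⊕ V) (V ⊕ V) ℝ := NormedSpace.exp (T • A) with hEdef
  -- basic facts about r
  have hrsum : ∀ y : V, ∑ x : V, r x y = ∑ w : V, r y w := by
    intro y; exact Finset.sum_congr rfl fun x _ => hsymm x y
  have hq0 : ∀ y : V, 0 ≤ (∑ w : V, r y w) / b := fun y =>
    div_nonneg (Finset.sum_nonneg fun w _ => hnonneg y w) hb.le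
  -- the eigenvectors
  set φ : V ⊕ V → ℝ := Sum.elim (fun _ => (1 : ℝ)) (fun y => (∑ w : V, r y w) / b) with hφdef
  set u : V ⊕ V → ℝ := Sum.elim (fun _ => (0 : ℝ)) (fun y => (∑ w : V, r y w) / b) with hudef
  -- column sums of A1 and A2
  have hA1col : ∀ y : V, ∑ x : V, A1 x y = b := by
    intro y
    have h1 : ∀ x : V, A1 x y
        = (if x = y then b - (∑ u : V, r y u) - r x y else 0) + r x y := by
      intro x
      by_cases hxy : x = y
      · subst hxy; simp [A1, hdiag]
      · simp [A1, hxy]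
    rw [Finset.sum_congr rfl fun x _ => h1 x, Finset.sum_add_distrib,
      Finset.sum_ite_eq' Finset.univ y fun x => b - (∑ u : V, r y u) - r x y]
    simp [hdiag y, hrsum y]
  have hA2col : ∀ y : V, ∑ x : V, A2 x y = ∑ w : V, r y w := by
    intro y; simpa [A2] using hrsum y
  -- vecMul unfolding
  have hvm : ∀ (w : V ⊕ V → ℝ) (N : Matrix (V ⊕ V) (V ⊕ V) ℝ) (j : V ⊕ V),
      Matrix.vecMul w N j = ∑ i : V ⊕ V, w i * N i j := fun _ _ _ => rfl
  -- left eigenvector relations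
  have hφA : Matrix.vecMul φ (T • A) = (b * T) • φ := by
    funext j
    cases j with
    | inl y =>
        rw [hvm]
        simp only [Fintype.sum_sum_type, hφdef, Sum.elim_inl, Sum.elim_inr,
          Matrix.smul_apply, A, Matrix.fromBlocks_apply₁₁, Matrix.fromBlocks_apply₂₁,
          Matrix.zero_apply, smul_eq_mul, mul_zero, Finset.sum_const_zero, add_zero, one_mul,
          Pi.smul_apply]
        rw [← Finset.mul_sum, hA1col y]
        ring
    | inr y =>
        rw [hvm]
        simp only [Fintype.sum_sum_type, hφdef, Sum.elim_inl, Sum.elim_inr,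
          Matrix.smul_apply, A, Matrix.fromBlocks_apply₁₂, Matrix.fromBlocks_apply₂₂,
          Matrix.zero_apply, smul_eq_mul, mul_zero, Finset.sum_const_zero, add_zero, one_mul,
          Pi.smul_apply]
        rw [← Finset.mul_sum, hA2col y]
        field_simp
  have huA : Matrix.vecMul u (T • A) = (0 : ℝ) • u := by
    funext j
    cases j with
    | inl y =>
        rw [hvm]
        simp [Fintype.sum_sum_type, hudef, A, Matrix.smul_apply, Matrix.fromBlocks_apply₁₁,
          Matrix.fromBlocks_apply₂₁]
    | inr y =>
        rw [hvm]
        simp [Fintype.sum_sum_type, hudef, A, Matrix.smul_apply, Matrix.fromBlocks_apply₁₂,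
          Matrix.fromBlocks_apply₂₂]
  have hφE : Matrix.vecMul φ E = Real.exp (b * T) • φ := vecMul_exp_eig _ _ _ hφA
  have huE : Matrix.vecMul u E = u := by
    have := vecMul_exp_eig (T • A) u 0 huA
    simpa using this
  -- entrywise nonnegativity of E
  have hS : ∀ x : V, ∑ w : V, r x w ≤ ∑ x' : V, ∑ w : V, r x' w := fun x =>
    Finset.single_le_sum (fun x' _ => Finset.sum_nonneg fun w _ => hnonneg x' w)
      (Finset.mem_univ x)
  have hSnn : 0 ≤ ∑ x' : V, ∑ w : V, r x' w :=
    Finset.sum_nonneg fun x' _ => Finset.sum_nonneg fun w _ => hnonneg x' w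
  have hEnn : ∀ i j, 0 ≤ E i j := by
    intro i j
    refine exp_entry_nonneg_shift (T • A) (T * (b + ∑ x' : V, ∑ w : V, r x' w)) ?_ i j
    intro i j
    rcases i with x | x <;> rcases j with w | w
    · by_cases hxw : x = w
      · subst hxw
        simp only [Matrix.smul_apply, A, Matrix.fromBlocks_apply₁₁, smul_eq_mul, if_pos rfl,
          Sum.inl.injEq]
        simp only [A1, if_pos rfl, if_true]
        have hsx : ∑ u : V, r x u ≤ ∑ x' : V, ∑ w : V, r x' w := hS x
        nlinarith [mul_nonneg hT (show (0:ℝ) ≤ 2 * b + (∑ x' : V, ∑ w : V, r x' w)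
          - ∑ u : V, r x u by linarith)]
      · simp only [Matrix.smul_apply, A, Matrix.fromBlocks_apply₁₁, smul_eq_mul,
          Sum.inl.injEq, if_neg hxw]
        simp only [A1, if_neg hxw, add_zero]
        exact mul_nonneg hT (hnonneg x w)
    · simp only [Matrix.smul_apply, A, Matrix.fromBlocks_apply₁₂, smul_eq_mul]
      have : (Sum.inl x : V ⊕ V) ≠ Sum.inr w := Sum.inl_ne_inr
      rw [if_neg this, add_zero]
      exact mul_nonneg hT (hnonneg x w)
    · simp only [Matrix.smul_apply, A, Matrix.fromBlocks_apply₂₁, Matrix.zero_apply,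
        smul_eq_mul, mul_zero, zero_add]
      have : (Sum.inr x : V ⊕ V) ≠ Sum.inl w := Sum.inr_ne_inl
      rw [if_neg this]
    · simp only [Matrix.smul_apply, A, Matrix.fromBlocks_apply₂₂, Matrix.zero_apply,
        smul_eq_mul, mul_zero, zero_add]
      by_cases hxw : (Sum.inr x : V ⊕ V) = Sum.inr w
      · rw [if_pos hxw]
        exact mul_nonneg hT (by linarith)
      · rw [if_neg hxw]
  -- bound z by M • (φ - u)
  have hzb : ∀ i : V ⊕ V, z i ≤ M * (φ i - u i) := by
    intro i
    rcases i with x | x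
    · simpa [hφdef, hudef] using hzM x
    · simp [hφdef, hudef, hzg x]
  have hz0' : ∀ i : V ⊕ V, 0 ≤ z i := by
    intro i; rcases i with x | x
    · exact hz0 x
    · rw [hzg x]
  -- the key pointwise bound on vecMul z E
  have hkey : ∀ j : V ⊕ V,
      Matrix.vecMul z E j ≤ M * (Real.exp (b * T) * φ j - u j) := by
    intro j
    have h1 : Matrix.vecMul z E j ≤ ∑ i : V ⊕ V, (M * (φ i - u i)) * E i j := by
      rw [hvm]
      exact Finset.sum_le_sum fun i _ => mul_le_mul_of_nonneg_right (hzb i) (hEnn i j)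
    have h2 : ∑ i : V ⊕ V, (M * (φ i - u i)) * E i j
        = M * (Matrix.vecMul φ E j - Matrix.vecMul u E j) := by
      rw [hvm, hvm, ← Finset.sum_sub_distrib, Finset.mul_sum]
      exact Finset.sum_congr rfl fun i _ => by ring
    rw [h2, hφE, huE] at h1
    simpa using h1
  -- conclude
  have hstep : ∀ y ∈ K,
      Matrix.vecMul z E (Sum.inl y) + Matrix.vecMul z E (Sum.inr y)
        ≤ M * Real.exp (b * T) * (1 + (∑ w : V, r y w) / b) := by
    intro y _
    have h1 := hkey (Sum.inl y)
    have h2 := hkey (Sum.inr y)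
    simp only [hφdef, hudef, Sum.elim_inl, Sum.elim_inr] at h1 h2
    have hq := hq0 y
    have := mul_nonneg hM hq
    nlinarith [Real.exp_pos (b * T)]
  calc ∑ y ∈ K, (Matrix.vecMul z E (Sum.inl y) + Matrix.vecMul z E (Sum.inr y))
      ≤ ∑ y ∈ K, M * Real.exp (b * T) * (1 + (∑ w : V, r y w) / b) :=
        Finset.sum_le_sum hstep
    _ = M * Real.exp (b * T) * ∑ y ∈ K, (1 + (∑ w : V, r y w) / b) := by
        rw [Finset.mul_sum]
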